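/- Let R be a commutative ring, M an R-module, N and m natural numbers, and (E_i)_{i < N} a family of pairwise commuting R-linear endomorphisms of M with E_i \circ E_i = 0 for every i. Then (\sum_{i < N} E_i)^m = m! \cdot \sum_{S \subseteq \{0, \dots, N-1\},\ |S| = m} \prod_{i \in S} E_i, where each product over S is independent of the order of its factors since the E_i pairwise commute. In particular, if m = p is a prime then the image of (\sum_{i<N} E_i)^p is contained in p \cdot M. -/

import Mathlib

private theorem aux_noncommProd_eq_zero {α β : Type*} [DecidableEq α] [MonoidWithZero β]
    (s : Finset α) (f : α → β) (comm) {i : α} (hi : i ∈ s) (h : f i = 0) :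
    s.noncommProd f comm = 0 := by
  have hins : s = insert i (s.erase i) := (Finset.insert_erase hi).symm
  rw [Finset.noncommProd_congr hins (fun _ _ => rfl) comm]
  refine (Finset.noncommProd_insert_of_notMem _ _ _ _ (Finset.notMem_erase _ _)).trans ?_
  rw [h, zero_mul]

private theorem aux_noncommProd_filter {α β : Type*} [DecidableEq α] [Monoid β]
    (s : Finset α) (f : α → β) (comm) (p : α → Prop) [DecidablePred p]
    (h1 : ∀ i ∈ s, ¬ p i → f i = 1) :
    s.noncommProd f comm = (s.filter p).noncommProd f
      (comm.mono (Finset.coe_subset.mpr (Finset.filter_subset p s))) := by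
  have hu : s = s.filter p ∪ s.filter (fun i => ¬ p i) :=
    (Finset.filter_union_filter_not_eq p s).symm
  calc s.noncommProd f comm
      = (s.filter p ∪ s.filter (fun i => ¬ p i)).noncommProd f
        (by rw [← hu]; exact comm) := Finset.noncommProd_congr hu (fun _ _ => rfl) comm
    _ = (s.filter p).noncommProd f _ * (s.filter fun i => ¬ p i).noncommProd f _ :=
        Finset.noncommProd_union_of_disjoint (Finset.disjoint_filter_filter_not _ _ _) _ _
    _ = (s.filter p).noncommProd f _ := by
        rw [Finset.noncommProd_eq_pow_card _ _ _ 1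
          (fun x hx => h1 x (Finset.mem_filter.mp hx).1 (Finset.mem_filter.mp hx).2),
          one_pow, mul_one]

/-- Let `R` be a commutative ring, `M` an `R`-module, and `(E i)_{i < N}` pairwise
commuting `R`-linear endomorphisms of `M` with `E i ∘ E i = 0`. Then
`(∑ i, E i)^m = m! • ∑_{S ⊆ {0,…,N-1}, |S| = m} ∏_{i ∈ S} E i` (the products taken as
`noncommProd`, well-defined since the `E i` commute). In particular, if `m` is a
prime then the image of `(∑ i, E i)^m` lies in `m • M`. -/
theorem sum_nilpotent_pow_eq_factorial_smul_sum
    (R : Type*) [CommRing R] (M : Type*) [AddCommGroup M] [Module R M]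
    (N m : ℕ) (E : Fin N → Module.End R M)
    (hcomm : ∀ i j, Commute (E i) (E j)) (hsq : ∀ i, E i * E i = 0) :
    ((∑ i, E i) ^ m =
      m.factorial •
        ∑ S ∈ Finset.powersetCard m (Finset.univ : Finset (Fin N)),
          S.noncommProd E (fun i _ j _ _ => hcomm i j)) ∧
    (m.Prime → ∀ v : M, ∃ w : M, ((∑ i, E i) ^ m) v = m • w) := by
  classical
  have hmain : (∑ i, E i) ^ m =
      m.factorial •
        ∑ S ∈ Finset.powersetCard m (Finset.univ : Finset (Fin N)),
          S.noncommProd E (fun i _ j _ _ => hcomm i j) := by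
    rw [Finset.sum_pow_eq_sum_piAntidiag_of_commute (Finset.univ : Finset (Fin N)) E
      (fun i _ j _ _ => hcomm i j) m]
    -- terms with some k i ≥ 2 vanish
    rw [← Finset.sum_filter_of_ne (p := fun k : Fin N → ℕ => ∀ i, k i ≤ 1)
      (by
        intro k hk hne i
        by_contra h
        push_neg at h
        apply hne
        have hz : E i ^ k i = 0 := by
          obtain ⟨l, hl⟩ := Nat.exists_eq_add_of_le h
          rw [hl, pow_add, pow_succ, pow_one, hsq, zero_mul]
        rw [aux_noncommProd_eq_zero _ _ _ (Finset.mem_univ i) hz, mul_zero])]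
    rw [Finset.smul_sum]
    refine Finset.sum_nbij' (fun k => Finset.univ.filter (fun i => k i = 1))
      (fun S i => if i ∈ S then 1 else 0) ?_ ?_ ?_ ?_ ?_
    · intro k hk
      simp only [Finset.mem_filter, Finset.mem_piAntidiag] at hk
      obtain ⟨⟨hsum, _⟩, hle⟩ := hk
      rw [Finset.mem_powersetCard]
      refine ⟨Finset.subset_univ _, ?_⟩
      rw [← hsum, Finset.card_filter]
      apply Finset.sum_congr rfl
      intro i _
      rcases Nat.le_one_iff_eq_zero_or_eq_one.mp (hle i) with h | h <;> simp [h]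
    · intro S hS
      rw [Finset.mem_powersetCard] at hS
      simp only [Finset.mem_filter, Finset.mem_piAntidiag]
      refine ⟨⟨?_, by simp⟩, fun i => by split <;> simp⟩
      rw [← hS.2, Finset.card_eq_sum_ones S, Finset.sum_ite_mem, Finset.univ_inter]
    · intro k hk
      simp only [Finset.mem_filter, Finset.mem_piAntidiag] at hk
      funext i
      rcases Nat.le_one_iff_eq_zero_or_eq_one.mp (hk.2 i) with h | h <;>
        simp [h, Finset.mem_filter]
    · intro S hS
      ext i
      simp [Finset.mem_filter]
    · intro k hk
      simp only [Finset.mem_filter, Finset.mem_piAntidiag] at hk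
      obtain ⟨⟨hsum, _⟩, hle⟩ := hk
      have hmul : Nat.multinomial Finset.univ k = m.factorial := by
        have hspec := Nat.multinomial_spec (Finset.univ : Finset (Fin N)) k
        have hprod : (∏ i, (k i).factorial) = 1 := by
          apply Finset.prod_eq_one
          intro i _
          rcases Nat.le_one_iff_eq_zero_or_eq_one.mp (hle i) with h | h <;> simp [h]
        rw [hprod, one_mul, hsum] at hspec
        exact hspec
      have hprodE : ∀ (c1) (c2),
          Finset.univ.noncommProd (fun j => E j ^ k j) c1 =
          (Finset.univ.filter (fun i => k i = 1)).noncommProd E c2 := by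
        intro c1 c2
        rw [aux_noncommProd_filter Finset.univ (fun j => E j ^ k j) c1 (fun i => k i = 1)
          (by
            intro i _ hi
            have : k i = 0 := by
              rcases Nat.le_one_iff_eq_zero_or_eq_one.mp (hle i) with h | h
              · exact h
              · exact absurd h hi
            show E i ^ k i = 1
            rw [this, pow_zero])]
        exact Finset.noncommProd_congr rfl
          (fun i hi => by rw [(Finset.mem_filter.mp hi).2, pow_one]) _
      rw [hprodE _ (fun i _ j _ _ => hcomm i j), hmul, nsmul_eq_mul]
  refine ⟨hmain, fun hp v => ?_⟩
  refine ⟨(m - 1).factorial •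
    (∑ S ∈ Finset.powersetCard m (Finset.univ : Finset (Fin N)),
      S.noncommProd E (fun i _ j _ _ => hcomm i j)) v, ?_⟩
  rw [hmain, LinearMap.smul_apply, ← smul_assoc, smul_eq_mul]
  congr 1
  rw [← Nat.succ_pred_eq_of_pos hp.pos, Nat.factorial_succ]
  simp
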